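/- Let m₁, m₂ ≥ 1 and let J₁₁, J₂₁, K₁₂, K₂₁ be differentiable functions of one real variable x taking values in the complex matrices of sizes m₁×m₁, m₂×m₁, m₁×m₂, m₂×m₁ respectively, with J₁₁(x) invertible for every x. Assume ∂_x J₁₁ = K₁₂J₂₁ and ∂_x J₂₁ = −K₂₁J₁₁ at every point. Then P := J₂₁·J₁₁⁻¹ satisfies ∂_x P = −K₂₁ − P·K₁₂·P; equivalently, with R := K₂₁ and Q := −K₁₂, the Miura-type relation ∂_x P = −R + PQP holds. -/

import Mathlib

noncomputable section

/-- Entrywise derivative of a matrix-valued function of one real variable. -/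
def dM {a b : Type*} (f : ℝ → Matrix a b ℂ) (x : ℝ) : Matrix a b ℂ :=
  Matrix.of fun i j => deriv (fun s => f s i j) x

lemma entry_hasDerivAt_mul {l m n : Type*} [Fintype m]
    (f : ℝ → Matrix l m ℂ) (g : ℝ → Matrix m n ℂ)
    (hf : ∀ i j, Differentiable ℝ fun x => f x i j)
    (hg : ∀ i j, Differentiable ℝ fun x => g x i j)
    (x : ℝ) (i : l) (j : n) :
    HasDerivAt (fun s => (f s * g s) i j)
      ((dM f x * g x + f x * dM g x) i j) x := by
  have key : HasDerivAt (fun s => ∑ k, f s i k * g s k j)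
      (∑ k, (deriv (fun s => f s i k) x * g x k j + f x i k * deriv (fun s => g s k j) x)) x :=
    HasDerivAt.fun_sum fun k _ => ((hf i k x).hasDerivAt.mul ((hg k j x).hasDerivAt))
  have e1 : (fun s => (f s * g s) i j) = fun s => ∑ k, f s i k * g s k j := by
    funext s; simp [Matrix.mul_apply]
  rw [e1]
  convert key using 1
  simp [dM, Matrix.mul_apply, Matrix.add_apply, Finset.sum_add_distrib]

lemma dM_mul {l m n : Type*} [Fintype m]
    (f : ℝ → Matrix l m ℂ) (g : ℝ → Matrix m n ℂ)
    (hf : ∀ i j, Differentiable ℝ fun x => f x i j)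
    (hg : ∀ i j, Differentiable ℝ fun x => g x i j) (x : ℝ) :
    dM (fun s => f s * g s) x = dM f x * g x + f x * dM g x := by
  ext i j
  have := (entry_hasDerivAt_mul f g hf hg x i j).deriv
  simpa [dM] using this

lemma differentiable_det {n : Type*} [Fintype n] [DecidableEq n]
    (g : ℝ → Matrix n n ℂ) (hg : ∀ i j, Differentiable ℝ fun x => g x i j) :
    Differentiable ℝ fun x => (g x).det := by
  have e : (fun x => (g x).det)
      = fun x => ∑ σ : Equiv.Perm n, ((Equiv.Perm.sign σ : ℤ) : ℂ) * ∏ i, g x (σ i) i := by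
    funext x; rw [Matrix.det_apply']
  rw [e]
  exact Differentiable.fun_sum fun σ _ =>
    (Differentiable.fun_finset_prod fun i _ => hg (σ i) i).const_mul _

lemma differentiable_inv_entry {n : Type*} [Fintype n] [DecidableEq n]
    (J : ℝ → Matrix n n ℂ) (hJ : ∀ i j, Differentiable ℝ fun x => J x i j)
    (hu : ∀ x, IsUnit (J x)) (i j : n) :
    Differentiable ℝ fun x => (J x)⁻¹ i j := by
  have hdet : Differentiable ℝ fun x => (J x).det := differentiable_det J hJ
  have hne : ∀ x, (J x).det ≠ 0 := fun x =>
    ((Matrix.isUnit_iff_isUnit_det _).mp (hu x)).ne_zero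
  have hadj : Differentiable ℝ fun x => (J x).adjugate i j := by
    have e : (fun x => (J x).adjugate i j)
        = fun x => ((J x).updateRow j (Pi.single i 1)).det := by
      funext x; rw [Matrix.adjugate_apply]
    rw [e]
    apply differentiable_det
    intro a b
    rcases eq_or_ne a j with h | h
    · simp [Matrix.updateRow_apply, h]
    · simpa [Matrix.updateRow_apply, h] using hJ a b
  have e : (fun x => (J x)⁻¹ i j) = fun x => ((J x).det)⁻¹ * (J x).adjugate i j := by
    funext x
    rw [Matrix.inv_def]
    simp [Ring.inverse_eq_inv']
  rw [e]
  exact (hdet.inv hne).mul hadj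

/-- **Miura-type relation between the matrix AKNS and Gerdjikov–Ivanov variables.**
If `∂_x J₁₁ = K₁₂J₂₁` and `∂_x J₂₁ = −K₂₁J₁₁` with `J₁₁` pointwise invertible, then
`P = J₂₁·J₁₁⁻¹` satisfies `∂_x P = −K₂₁ − P·K₁₂·P`; equivalently, with
`R = K₂₁`, `Q = −K₁₂`, the relation `∂_x P = −R + PQP` holds. -/
theorem asdym_miura_relation (m₁ m₂ : ℕ) (hm₁ : 1 ≤ m₁) (hm₂ : 1 ≤ m₂)
    (J₁₁ : ℝ → Matrix (Fin m₁) (Fin m₁) ℂ)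
    (J₂₁ : ℝ → Matrix (Fin m₂) (Fin m₁) ℂ)
    (K₁₂ : ℝ → Matrix (Fin m₁) (Fin m₂) ℂ)
    (K₂₁ : ℝ → Matrix (Fin m₂) (Fin m₁) ℂ)
    (hJ₁₁d : ∀ i j, Differentiable ℝ fun x => J₁₁ x i j)
    (hJ₂₁d : ∀ i j, Differentiable ℝ fun x => J₂₁ x i j)
    (hK₁₂d : ∀ i j, Differentiable ℝ fun x => K₁₂ x i j)
    (hK₂₁d : ∀ i j, Differentiable ℝ fun x => K₂₁ x i j)
    (hJinv : ∀ x, IsUnit (J₁₁ x))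
    (h1 : ∀ x, dM J₁₁ x = K₁₂ x * J₂₁ x)
    (h2 : ∀ x, dM J₂₁ x = -(K₂₁ x * J₁₁ x)) :
    (∀ x, dM (fun s => J₂₁ s * (J₁₁ s)⁻¹) x =
      -K₂₁ x - (J₂₁ x * (J₁₁ x)⁻¹) * K₁₂ x * (J₂₁ x * (J₁₁ x)⁻¹)) ∧
    (∀ x, dM (fun s => J₂₁ s * (J₁₁ s)⁻¹) x =
      -(K₂₁ x) + (J₂₁ x * (J₁₁ x)⁻¹) * (-K₁₂ x) * (J₂₁ x * (J₁₁ x)⁻¹)) := by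
  have hudet : ∀ x, IsUnit (J₁₁ x).det := fun x =>
    (Matrix.isUnit_iff_isUnit_det _).mp (hJinv x)
  have hInvd : ∀ i j, Differentiable ℝ fun x => (J₁₁ x)⁻¹ i j :=
    differentiable_inv_entry _ hJ₁₁d hJinv
  have hJI : ∀ x, J₁₁ x * (J₁₁ x)⁻¹ = 1 := fun x => Matrix.mul_nonsing_inv _ (hudet x)
  have hIJ : ∀ x, (J₁₁ x)⁻¹ * J₁₁ x = 1 := fun x => Matrix.nonsing_inv_mul _ (hudet x)
  have key : ∀ x, dM (fun s => (J₁₁ s)⁻¹) x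
      = -((J₁₁ x)⁻¹ * dM J₁₁ x * (J₁₁ x)⁻¹) := by
    intro x
    have h0 : dM (fun s => (J₁₁ s)⁻¹ * J₁₁ s) x = 0 := by
      have e : (fun s => (J₁₁ s)⁻¹ * J₁₁ s)
          = fun _ => (1 : Matrix (Fin m₁) (Fin m₁) ℂ) := by
        funext s; exact hIJ s
      rw [e]; ext i j; simp [dM]
    rw [dM_mul _ _ hInvd hJ₁₁d] at h0
    have h1' : dM (fun s => (J₁₁ s)⁻¹) x * J₁₁ x = -((J₁₁ x)⁻¹ * dM J₁₁ x) :=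
      eq_neg_of_add_eq_zero_left h0
    calc dM (fun s => (J₁₁ s)⁻¹) x
        = dM (fun s => (J₁₁ s)⁻¹) x * (J₁₁ x * (J₁₁ x)⁻¹) := by rw [hJI x, mul_one]
      _ = -((J₁₁ x)⁻¹ * dM J₁₁ x * (J₁₁ x)⁻¹) := by
          rw [← mul_assoc, h1', neg_mul]
  have main : ∀ x, dM (fun s => J₂₁ s * (J₁₁ s)⁻¹) x =
      -K₂₁ x - (J₂₁ x * (J₁₁ x)⁻¹) * K₁₂ x * (J₂₁ x * (J₁₁ x)⁻¹) := by
    intro x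
    rw [dM_mul _ _ hJ₂₁d hInvd, h2 x, key x, h1 x]
    simp only [Matrix.neg_mul, Matrix.mul_neg, Matrix.mul_assoc, hJI x, Matrix.mul_one,
      sub_eq_add_neg]
  refine ⟨main, fun x => ?_⟩
  rw [main x]
  simp only [Matrix.neg_mul, Matrix.mul_neg, sub_eq_add_neg]

end
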